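/- arXiv:1203.0041 — 2 statements merged into one kernel-verified Lean document; each statement's English description precedes it below -/
import Mathlib

section
/- For nonnegative integers p and r, ∫_{-1}^{1} (1-x)^p U_r(x) √(1-x²) dx = (r+1) 2^{p+2} Γ(p+3/2) Γ(3/2) / Γ(p+3) · (-p)_r / (p+3)_r. In particular the integral vanishes when r > p. -/
/-- Pochhammer symbol (rising factorial) `(a)_k`. -/
noncomputable def poch (a : ℝ) (k : ℕ) : ℝ := ∏ i ∈ Finset.range k, (a + i)

/-- Chebyshev polynomial of the second kind, `U_r(x) = (r+1) ₂F₁(-r, r+2; 3/2; (1-x)/2)`. -/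
noncomputable def ChebU (r : ℕ) (x : ℝ) : ℝ :=
  ((r:ℝ)+1) * ∑ j ∈ Finset.range (r+1),
      poch (-(r:ℝ)) j * poch ((r:ℝ)+2) j / (poch (3/2) j * (Nat.factorial j : ℝ))
        * ((1-x)/2)^j

/-! ### Basic facts about `poch` -/

lemma poch_zero (a : ℝ) : poch a 0 = 1 := by simp [poch]

lemma poch_one (a : ℝ) : poch a 1 = a := by simp [poch]

lemma poch_succ (a : ℝ) (k : ℕ) : poch a (k+1) = poch a k * (a + k) := by
  simp [poch, Finset.prod_range_succ]

lemma poch_succ' (a : ℝ) (k : ℕ) : poch a (k+1) = a * poch (a+1) k := by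
  rw [poch, Finset.prod_range_succ', poch]
  simp only [Nat.cast_zero, add_zero, mul_comm]
  congr 1
  exact Finset.prod_congr rfl fun i _ => by push_cast; ring

lemma poch_pos {a : ℝ} (ha : 0 < a) (k : ℕ) : 0 < poch a k :=
  Finset.prod_pos fun i _ => by positivity

lemma poch_neg_nat_eq_zero {r j : ℕ} (h : r < j) : poch (-(r:ℝ)) j = 0 :=
  Finset.prod_eq_zero (Finset.mem_range.2 h) (by simp)

/-- The coefficients of the hypergeometric sum defining `ChebU`. -/
noncomputable def cb (r j : ℕ) : ℝ :=
  poch (-(r:ℝ)) j * poch ((r:ℝ)+2) j / (poch (3/2) j * (Nat.factorial j : ℝ))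

lemma cb_eq_zero {r j : ℕ} (h : r < j) : cb r j = 0 := by
  simp [cb, poch_neg_nat_eq_zero h]

/-- The key contiguous-relation identity between coefficients, which yields the
three-term recurrence for `ChebU`. -/
lemma key (r m : ℕ) :
    ((r:ℝ)+3) * cb (r+2) (m+1) - 2*((r:ℝ)+2) * cb (r+1) (m+1) + ((r:ℝ)+1) * cb r (m+1)
      = -4*((r:ℝ)+2) * cb (r+1) m := by
  have hr1 : ((r:ℝ)+1) ≠ 0 := by positivity
  have hr3m : ((r:ℝ)+3+m) ≠ 0 := by positivity
  have hA : poch (-((r:ℝ)+2)) (m+1) = -((r:ℝ)+2) * poch (-((r:ℝ)+1)) m := by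
    rw [poch_succ', show -((r:ℝ)+2)+1 = -((r:ℝ)+1) by ring]
  have hD : poch ((r:ℝ)+2+2) (m+1) = poch ((r:ℝ)+4) m * ((r:ℝ)+4+m) := by
    rw [show (r:ℝ)+2+2 = (r:ℝ)+4 by ring, poch_succ]
  have hB : poch (-((r:ℝ)+1)) (m+1) = poch (-((r:ℝ)+1)) m * (-((r:ℝ)+1)+m) := poch_succ _ _
  have hE1 : poch ((r:ℝ)+1+2) (m+1) = ((r:ℝ)+3) * poch ((r:ℝ)+4) m := by
    rw [show (r:ℝ)+1+2 = (r:ℝ)+3 by ring, poch_succ', show (r:ℝ)+3+1 = (r:ℝ)+4 by ring]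
  have hC : poch (-(r:ℝ)) (m+1)
      = -(poch (-((r:ℝ)+1)) m * (-((r:ℝ)+1)+m) * (-((r:ℝ)+1)+m+1)) / ((r:ℝ)+1) := by
    rw [eq_div_iff hr1]
    have h1 := poch_succ' (-((r:ℝ)+1)) (m+1)
    rw [show -((r:ℝ)+1)+1 = -(r:ℝ) by ring] at h1
    have h2 := poch_succ (-((r:ℝ)+1)) (m+1)
    rw [poch_succ (-((r:ℝ)+1)) m] at h2
    push_cast at h2
    linear_combination h1 - h2
  have hF : poch ((r:ℝ)+2) (m+1) = ((r:ℝ)+2) * poch ((r:ℝ)+1+2) m := by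
    rw [poch_succ', show (r:ℝ)+2+1 = (r:ℝ)+1+2 by ring]
  have hEm : poch ((r:ℝ)+1+2) m = ((r:ℝ)+3) * poch ((r:ℝ)+4) m / ((r:ℝ)+3+m) := by
    rw [show (r:ℝ)+1+2 = (r:ℝ)+3 by ring, eq_div_iff hr3m]
    have h1 := poch_succ ((r:ℝ)+3) m
    have h2 := poch_succ' ((r:ℝ)+3) m
    rw [show (r:ℝ)+3+1 = (r:ℝ)+4 by ring] at h2
    linear_combination h2 - h1
  have hG : poch (3/2 : ℝ) (m+1) = poch (3/2) m * (3/2+m) := poch_succ _ _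
  have hGne : poch (3/2 : ℝ) m ≠ 0 := ne_of_gt (poch_pos (by norm_num) m)
  have hMne : ((Nat.factorial m : ℝ)) ≠ 0 := by positivity
  have h32m : ((3:ℝ)/2+m) ≠ 0 := by positivity
  have hm1 : ((m:ℝ)+1) ≠ 0 := by positivity
  simp only [cb, Nat.factorial_succ]
  push_cast
  rw [hA, hD, hB, hE1, hC, hF, hEm, hG]
  field_simp
  ring

lemma ChebU_sum (r n : ℕ) (h : r+1 ≤ n) (x : ℝ) :
    ChebU r x = ((r:ℝ)+1) * ∑ j ∈ Finset.range n, cb r j * ((1-x)/2)^j := by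
  unfold ChebU
  congr 1
  refine Finset.sum_subset (Finset.range_subset_range.2 h) (fun j hj hj2 => ?_)
  have : r < j := by
    simp only [Finset.mem_range] at hj2; omega
  simp [poch_neg_nat_eq_zero this]

/-- Three-term recurrence for `ChebU`. -/
lemma ChebU_rec (r : ℕ) (x : ℝ) :
    ChebU (r+2) x = 2*x*ChebU (r+1) x - ChebU r x := by
  rw [ChebU_sum (r+2) (r+3) le_rfl, ChebU_sum (r+1) (r+3) (by omega),
    ChebU_sum r (r+3) (by omega)]
  push_cast
  set y := (1-x)/2 with hy
  have hx : x = 1 - 2*y := by rw [hy]; ring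
  rw [hx]
  have main : ∑ j ∈ Finset.range (r+3),
        ((((r:ℝ)+3) * cb (r+2) j - 2*((r:ℝ)+2)*cb (r+1) j + ((r:ℝ)+1) * cb r j) * y^j)
      = ∑ j ∈ Finset.range (r+3), ((-4*((r:ℝ)+2) * cb (r+1) j) * y^(j+1)) := by
    conv_rhs => rw [Finset.sum_range_succ]
    rw [Finset.sum_range_succ']
    have l0 : ((((r:ℝ)+3) * cb (r+2) 0 - 2*((r:ℝ)+2)*cb (r+1) 0 + ((r:ℝ)+1) * cb r 0) * y^0)
        = 0 := by
      simp [cb, poch]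
      ring
    have ltop : ((-4*((r:ℝ)+2) * cb (r+1) (r+2)) * y^(r+2+1)) = 0 := by
      simp [cb_eq_zero (show r+1 < r+2 by omega)]
    rw [l0, ltop, add_zero, add_zero]
    refine Finset.sum_congr rfl fun j _ => ?_
    rw [key r j]
  have e1 : ∑ j ∈ Finset.range (r+3),
        ((((r:ℝ)+3) * cb (r+2) j - 2*((r:ℝ)+2)*cb (r+1) j + ((r:ℝ)+1) * cb r j) * y^j)
      = ((r:ℝ)+3) * (∑ j ∈ Finset.range (r+3), cb (r+2) j * y^j)
        - 2*((r:ℝ)+2) * (∑ j ∈ Finset.range (r+3), cb (r+1) j * y^j)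
        + ((r:ℝ)+1) * (∑ j ∈ Finset.range (r+3), cb r j * y^j) := by
    rw [Finset.mul_sum, Finset.mul_sum, Finset.mul_sum, ← Finset.sum_sub_distrib,
      ← Finset.sum_add_distrib]
    exact Finset.sum_congr rfl fun j _ => by ring
  have e2 : ∑ j ∈ Finset.range (r+3), ((-4*((r:ℝ)+2) * cb (r+1) j) * y^(j+1))
      = (-4*((r:ℝ)+2) * y) * (∑ j ∈ Finset.range (r+3), cb (r+1) j * y^j) := by
    rw [Finset.mul_sum]
    exact Finset.sum_congr rfl fun j _ => by ring
  linear_combination main + e2 - e1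

lemma ChebU_zero (x : ℝ) : ChebU 0 x = 1 := by
  simp [ChebU, poch]

lemma ChebU_one (x : ℝ) : ChebU 1 x = 2*x := by
  simp [ChebU, poch, Finset.sum_range_succ]
  ring

/-! ### The beta integral -/

lemma realBeta (u v : ℝ) (hu : 0 < u) (hv : 0 < v) :
    ∫ x in (0:ℝ)..1, x ^ (u-1) * (1-x) ^ (v-1)
      = Real.Gamma u * Real.Gamma v / Real.Gamma (u+v) := by
  have hb : Complex.betaIntegral u v
      = ((∫ x in (0:ℝ)..1, x ^ (u-1) * (1-x) ^ (v-1) : ℝ) : ℂ) := by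
    rw [Complex.betaIntegral]
    trans (∫ x in (0:ℝ)..1, ((x ^ (u-1) * (1-x) ^ (v-1) : ℝ) : ℂ))
    · refine intervalIntegral.integral_congr fun x hx => ?_
      rw [Set.uIcc_of_le (by norm_num : (0:ℝ) ≤ 1)] at hx
      rw [Complex.ofReal_mul, Complex.ofReal_cpow hx.1, Complex.ofReal_cpow (by linarith [hx.2])]
      push_cast
      ring
    · exact RCLike.intervalIntegral_ofReal
  have h := Complex.Gamma_mul_Gamma_eq_betaIntegral
    (s := (u:ℂ)) (t := (v:ℂ)) (by simpa using hu) (by simpa using hv)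
  rw [hb, Complex.Gamma_ofReal, Complex.Gamma_ofReal, ← Complex.ofReal_add,
    Complex.Gamma_ofReal] at h
  have h3 : Real.Gamma u * Real.Gamma v
      = Real.Gamma (u+v) * ∫ x in (0:ℝ)..1, x ^ (u-1) * (1-x) ^ (v-1) := by
    exact_mod_cast h
  have hΓ : Real.Gamma (u+v) ≠ 0 := ne_of_gt (Real.Gamma_pos_of_pos (by linarith))
  rw [eq_div_iff hΓ]
  linarith [h3]

lemma sqrtBeta (m : ℕ) : ∫ x in (-1:ℝ)..1, (1-x)^m * Real.sqrt (1-x^2)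
    = 2^(m+2) * Real.Gamma ((m:ℝ)+3/2) * Real.Gamma (3/2) / Real.Gamma ((m:ℝ)+3) := by
  have comp := intervalIntegral.integral_comp_mul_add (a := 0) (b := 1)
    (f := fun x => (1-x)^m * Real.sqrt (1-x^2)) (c := -2) (by norm_num) 1
  norm_num at comp
  rw [intervalIntegral.integral_symm (-1:ℝ) 1] at comp
  have hmne : ((m:ℝ)+3/2-1) ≠ 0 := by
    have : (0:ℝ) ≤ (m:ℝ) := Nat.cast_nonneg m
    intro hc; nlinarith
  have h4 : Real.sqrt 4 = 2 := by
    rw [show (4:ℝ) = 2^2 by norm_num, Real.sqrt_sq (by norm_num)]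
  have congr1 : (∫ t in (0:ℝ)..1, (2*t)^m * Real.sqrt (1-(-(2*t)+1)^2))
      = ∫ t in (0:ℝ)..1, 2^(m+1) * (t ^ ((m:ℝ)+3/2-1) * (1-t) ^ ((3:ℝ)/2-1)) := by
    refine intervalIntegral.integral_congr fun t ht => ?_
    rw [Set.uIcc_of_le (by norm_num : (0:ℝ) ≤ 1)] at ht
    rw [show 1-(-(2*t)+1)^2 = 4*(t*(1-t)) by ring, Real.sqrt_mul (by norm_num : (0:ℝ) ≤ 4),
      h4, Real.sqrt_mul ht.1, mul_pow]
    rw [show ((3:ℝ)/2-1) = 1/2 by norm_num, ← Real.sqrt_eq_rpow]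
    have hts : t^m * Real.sqrt t = t ^ ((m:ℝ)+3/2-1) := by
      rcases ht.1.eq_or_lt with h | h
      · rw [← h, Real.sqrt_zero, mul_zero, eq_comm]
        exact Real.zero_rpow hmne
      · rw [show ((m:ℝ)+3/2-1) = (m:ℝ)+1/2 by ring, Real.rpow_add h,
          Real.rpow_natCast, Real.sqrt_eq_rpow]
    rw [← hts]
    ring
  have B := realBeta ((m:ℝ)+3/2) (3/2) (by positivity) (by norm_num)
  have hX : (∫ x in (-1:ℝ)..1, (1-x)^m * Real.sqrt (1-x^2))
      = 2 * ∫ t in (0:ℝ)..1, (2*t)^m * Real.sqrt (1-(-(2*t)+1)^2) := by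
    linarith [comp]
  rw [hX, congr1, intervalIntegral.integral_const_mul, B,
    show (m:ℝ)+3/2+3/2 = (m:ℝ)+3 by ring]
  ring

/-! ### The recurrence satisfied by the right-hand side -/

lemma Vrec (p r : ℕ) :
    2 * (((r:ℝ)+1+1) * 2^(p+2) * Real.Gamma ((p:ℝ)+3/2) * Real.Gamma (3/2)
          / Real.Gamma ((p:ℝ)+3) * (poch (-(p:ℝ)) (r+1) / poch ((p:ℝ)+3) (r+1)))
      - 2 * (((r:ℝ)+1+1) * 2^(p+1+2) * Real.Gamma ((p:ℝ)+1+3/2) * Real.Gamma (3/2)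
          / Real.Gamma ((p:ℝ)+1+3) * (poch (-((p:ℝ)+1)) (r+1) / poch ((p:ℝ)+1+3) (r+1)))
      - (((r:ℝ)+1) * 2^(p+2) * Real.Gamma ((p:ℝ)+3/2) * Real.Gamma (3/2)
          / Real.Gamma ((p:ℝ)+3) * (poch (-(p:ℝ)) r / poch ((p:ℝ)+3) r))
      = ((r:ℝ)+2+1) * 2^(p+2) * Real.Gamma ((p:ℝ)+3/2) * Real.Gamma (3/2)
          / Real.Gamma ((p:ℝ)+3) * (poch (-(p:ℝ)) (r+2) / poch ((p:ℝ)+3) (r+2)) := by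
  have hp3 : ((p:ℝ)+3) ≠ 0 := by positivity
  have hp3r : ((p:ℝ)+3+r) ≠ 0 := by positivity
  have hp4r : ((p:ℝ)+3+r+1) ≠ 0 := by positivity
  have hΓ3 : Real.Gamma ((p:ℝ)+3) ≠ 0 := ne_of_gt (Real.Gamma_pos_of_pos (by positivity))
  have hpochB : poch ((p:ℝ)+3) r ≠ 0 := ne_of_gt (poch_pos (by positivity) r)
  have hg1 : Real.Gamma ((p:ℝ)+1+3/2) = ((p:ℝ)+3/2) * Real.Gamma ((p:ℝ)+3/2) := by
    rw [show (p:ℝ)+1+3/2 = ((p:ℝ)+3/2)+1 by ring, Real.Gamma_add_one (by positivity)]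
  have hg2 : Real.Gamma ((p:ℝ)+1+3) = ((p:ℝ)+3) * Real.Gamma ((p:ℝ)+3) := by
    rw [show (p:ℝ)+1+3 = ((p:ℝ)+3)+1 by ring, Real.Gamma_add_one (by positivity)]
  have hp1 : poch (-((p:ℝ)+1)) (r+1) = -((p:ℝ)+1) * poch (-(p:ℝ)) r := by
    rw [poch_succ', show -((p:ℝ)+1)+1 = -(p:ℝ) by ring]
  have hp2 : poch ((p:ℝ)+1+3) (r+1)
      = poch ((p:ℝ)+3) r * ((p:ℝ)+3+r) * ((p:ℝ)+3+r+1) / ((p:ℝ)+3) := by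
    rw [eq_div_iff hp3]
    have h1 := poch_succ' ((p:ℝ)+3) (r+1)
    rw [show (p:ℝ)+3+1 = (p:ℝ)+1+3 by ring] at h1
    have h2 := poch_succ ((p:ℝ)+3) (r+1)
    rw [poch_succ ((p:ℝ)+3) r] at h2
    push_cast at h2
    linear_combination h2 - h1
  have ha1 : poch (-(p:ℝ)) (r+1) = poch (-(p:ℝ)) r * (-(p:ℝ)+r) := poch_succ _ _
  have ha2 : poch (-(p:ℝ)) (r+2) = poch (-(p:ℝ)) r * (-(p:ℝ)+r) * (-(p:ℝ)+r+1) := by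
    rw [poch_succ, poch_succ]
    push_cast
    ring
  have hb2 : poch ((p:ℝ)+3) (r+2) = poch ((p:ℝ)+3) r * ((p:ℝ)+3+r) * ((p:ℝ)+3+r+1) := by
    rw [poch_succ, poch_succ]
    push_cast
    ring
  have hb1 : poch ((p:ℝ)+3) (r+1) = poch ((p:ℝ)+3) r * ((p:ℝ)+3+r) := poch_succ _ _
  have hpow : (2:ℝ)^(p+1+2) = 2 * 2^(p+2) := by
    rw [show p+1+2 = (p+2)+1 by omega, pow_succ]
    ring
  rw [hg1, hg2, hp1, hp2, ha2, ha1, hb2, hb1, hpow]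
  field_simp
  ring

/-! ### Main theorem -/

/-- `∫_{-1}^{1} (1-x)^p U_r(x) √(1-x²) dx
      = (r+1) 2^{p+2} Γ(p+3/2) Γ(3/2) / Γ(p+3) · (-p)_r / (p+3)_r`. -/
theorem chebU_moment (p r : ℕ) :
    ∫ x in (-1:ℝ)..1, (1 - x)^p * ChebU r x * Real.sqrt (1 - x^2) =
      ((r:ℝ)+1) * 2^(p+2) * Real.Gamma ((p:ℝ) + 3/2) * Real.Gamma (3/2)
        / Real.Gamma ((p:ℝ)+3) * (poch (-(p:ℝ)) r / poch ((p:ℝ)+3) r) := by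
  have contU : ∀ s : ℕ, Continuous (ChebU s) := by
    intro s
    unfold ChebU
    exact continuous_const.mul (continuous_finset_sum _ fun j _ =>
      continuous_const.mul (((continuous_const.sub continuous_id).div_const 2).pow j))
  have contf : ∀ (q s : ℕ), Continuous fun x : ℝ => (1-x)^q * ChebU s x * Real.sqrt (1-x^2) :=
    fun q s => (((continuous_const.sub continuous_id).pow q).mul (contU s)).mul
      (Real.continuous_sqrt.comp (continuous_const.sub (continuous_pow 2)))
  have intf : ∀ (q s : ℕ), IntervalIntegrable
      (fun x : ℝ => (1-x)^q * ChebU s x * Real.sqrt (1-x^2))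
      MeasureTheory.volume (-1) 1 :=
    fun q s => (contf q s).intervalIntegrable _ _
  induction r using Nat.twoStepInduction generalizing p with
  | zero =>
    simp_rw [ChebU_zero, mul_one]
    rw [sqrtBeta p]
    simp [poch_zero]
  | one =>
    have hsplit : ∀ x : ℝ, (1-x)^p * ChebU 1 x * Real.sqrt (1-x^2)
        = 2*((1-x)^p * Real.sqrt (1-x^2)) - 2*((1-x)^(p+1) * Real.sqrt (1-x^2)) := by
      intro x
      rw [ChebU_one, pow_succ]
      ring
    simp_rw [hsplit]
    have intg : ∀ q : ℕ, IntervalIntegrable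
        (fun x : ℝ => (1-x)^q * Real.sqrt (1-x^2)) MeasureTheory.volume (-1) 1 := by
      intro q
      exact (((continuous_const.sub continuous_id).pow q).mul
        (Real.continuous_sqrt.comp (continuous_const.sub (continuous_pow 2)))).intervalIntegrable _ _
    rw [intervalIntegral.integral_sub ((intg p).const_mul 2) ((intg (p+1)).const_mul 2),
      intervalIntegral.integral_const_mul, intervalIntegral.integral_const_mul,
      sqrtBeta p, sqrtBeta (p+1)]
    have hg1 : Real.Gamma ((p:ℝ)+1+3/2) = ((p:ℝ)+3/2) * Real.Gamma ((p:ℝ)+3/2) := by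
      rw [show (p:ℝ)+1+3/2 = ((p:ℝ)+3/2)+1 by ring, Real.Gamma_add_one (by positivity)]
    have hg2 : Real.Gamma ((p:ℝ)+1+3) = ((p:ℝ)+3) * Real.Gamma ((p:ℝ)+3) := by
      rw [show (p:ℝ)+1+3 = ((p:ℝ)+3)+1 by ring, Real.Gamma_add_one (by positivity)]
    have hpow : (2:ℝ)^(p+1+2) = 2 * 2^(p+2) := by
      rw [show p+1+2 = (p+2)+1 by omega, pow_succ]
      ring
    have hΓ3 : Real.Gamma ((p:ℝ)+3) ≠ 0 := ne_of_gt (Real.Gamma_pos_of_pos (by positivity))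
    have hp3 : ((p:ℝ)+3) ≠ 0 := by positivity
    push_cast
    rw [hg1, hg2, hpow, poch_one, poch_one]
    field_simp
    ring
  | more n IH0 IH1 =>
    have hptw : ∀ x : ℝ, (1-x)^p * ChebU (n+2) x * Real.sqrt (1-x^2)
        = (2*((1-x)^p * ChebU (n+1) x * Real.sqrt (1-x^2))
            - 2*((1-x)^(p+1) * ChebU (n+1) x * Real.sqrt (1-x^2)))
          - (1-x)^p * ChebU n x * Real.sqrt (1-x^2) := by
      intro x
      rw [ChebU_rec, pow_succ]
      ring
    simp_rw [hptw]
    rw [intervalIntegral.integral_sub (((intf p (n+1)).const_mul 2).sub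
        ((intf (p+1) (n+1)).const_mul 2)) (intf p n),
      intervalIntegral.integral_sub ((intf p (n+1)).const_mul 2)
        ((intf (p+1) (n+1)).const_mul 2),
      intervalIntegral.integral_const_mul, intervalIntegral.integral_const_mul,
      IH1 p, IH1 (p+1), IH0 p]
    push_cast
    linear_combination Vrec p n
end

section
/- Fix ℓ ∈ ½ℕ with 2ℓ ≥ 1. Let sgn_k(n) ∈ {±1} satisfy the recursion sgn_k(n+1)(n+1)(2ℓ+n+2) = -sgn_k(n)(n+k+2)(2ℓ-k+n+1) + sgn_{k+1}(n)(2ℓ-k)(k+1) for 0 ≤ k < 2ℓ (and appropriately at k = 2ℓ), with sgn_k(0) = 1 for all k. Then sgn_k(n) = (-1)^n for all k and n. -/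
/-- The sign determination for the leading coefficients `c_{k0}(n)`: if
`sgn_k(n) ∈ {±1}` satisfies `sgn_k(0) = 1` and the recursion
`sgn_k(n+1)(n+1)(2ℓ+n+2) = -sgn_k(n)(n+k+2)(2ℓ-k+n+1) + sgn_{k+1}(n)(2ℓ-k)(k+1)`
for `0 ≤ k ≤ 2ℓ` (the last term vanishing at `k = 2ℓ`), then `sgn_k(n) = (-1)^n`.
Here `L = 2ℓ ≥ 1`. -/
theorem sign_determination (L : ℕ) (hL : 1 ≤ L) (sgn : ℕ → ℕ → ℝ)
    (hpm : ∀ k n, sgn k n = 1 ∨ sgn k n = -1)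
    (hinit : ∀ k, sgn k 0 = 1)
    (hrec : ∀ k, k ≤ L → ∀ n,
      sgn k (n+1) * ((n:ℝ)+1) * ((L:ℝ)+(n:ℝ)+2) =
        -sgn k n * ((n:ℝ)+(k:ℝ)+2) * ((L:ℝ)-(k:ℝ)+(n:ℝ)+1)
          + sgn (k+1) n * ((L:ℝ)-(k:ℝ)) * ((k:ℝ)+1)) :
    ∀ k, k ≤ L → ∀ n, sgn k n = (-1:ℝ)^n := by
  intro k hk n
  induction n generalizing k hk with
  | zero => simpa using hinit k
  | succ n ih =>
    have h := hrec k hk n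
    have hk' : sgn k n = (-1:ℝ)^n := ih k hk
    have hterm : sgn (k+1) n * ((L:ℝ)-(k:ℝ)) = (-1:ℝ)^n * ((L:ℝ)-(k:ℝ)) := by
      rcases eq_or_lt_of_le hk with rfl | hlt
      · simp
      · rw [ih (k+1) hlt]
    have hX : (0:ℝ) < ((n:ℝ)+1) * ((L:ℝ)+(n:ℝ)+2) := by positivity
    have key : sgn k (n+1) * (((n:ℝ)+1) * ((L:ℝ)+(n:ℝ)+2))
        = (-1:ℝ)^(n+1) * (((n:ℝ)+1) * ((L:ℝ)+(n:ℝ)+2)) := by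
      rw [pow_succ]
      linear_combination h + ((k:ℝ)+1) * hterm
        - ((n:ℝ)+(k:ℝ)+2) * ((L:ℝ)-(k:ℝ)+(n:ℝ)+1) * hk'
    exact mul_right_cancel₀ (ne_of_gt hX) key
end
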